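/- For generic parameters a, b, q and nonnegative integers l_1 < ⋯ < l_m, the determinant det_{1≤j,k≤m}((aq^{j-1}; q)_{l_k} (bq^{m-j}; q)_{l_k}) equals q^{C(m,3)} b^{C(m,2)} ∏_{j=1}^m [(a;q)_{l_j}(b;q)_{l_j}(q^{j-m}a/b;q)_{j-1} / ((a;q)_{j-1}(b;q)_{j-1})] · ∏_{1≤i<j≤m}(q^{l_j}-q^{l_i}). -/

import Mathlib

open Finset

/-- q-Pochhammer symbol `(x;q)_n = ∏_{j=0}^{n-1} (1 - x q^j)`. -/
def qPoch {K : Type*} [Field K] (q x : K) (n : ℕ) : K :=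
  ∏ j ∈ Finset.range n, (1 - x * q ^ j)

section DetQPochHelpers
open Polynomial
variable {K : Type*} [Field K]

noncomputable def pp (a b q : K) (n j : ℕ) : Polynomial K :=
  (∏ t ∈ range j, (1 - Polynomial.C (a*q^t) * Polynomial.X)) *
  (∏ t ∈ range (n-1-j), (1 - Polynomial.C (b*q^t) * Polynomial.X))


lemma natDegree_prod_lin_le (c : ℕ → K) (s : ℕ) :
    (∏ t ∈ range s, (1 - Polynomial.C (c t) * Polynomial.X)).natDegree ≤ s := by
  refine le_trans (Polynomial.natDegree_prod_le _ _) ?_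
  calc ∑ t ∈ range s, ((1 : K[X]) - C (c t) * X).natDegree
      ≤ ∑ t ∈ range s, 1 := by
        refine Finset.sum_le_sum fun t _ => ?_
        refine le_trans (Polynomial.natDegree_sub_le _ _) ?_
        simp
        exact le_trans (Polynomial.natDegree_C_mul_le _ _) (by simp)
    _ = s := by simp

lemma pp_natDegree_lt (a b q : K) {n j : ℕ} (hj : j < n) : (pp a b q n j).natDegree < n := by
  refine lt_of_le_of_lt (le_trans (Polynomial.natDegree_mul_le) ?_) (show n - 1 < n by omega)
  have h1 := natDegree_prod_lin_le (fun t => a * q ^ t) j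
  have h2 := natDegree_prod_lin_le (fun t => b * q ^ t) (n - 1 - j)
  omega

noncomputable def cm (a b q : K) (n : ℕ) : Matrix (Fin n) (Fin n) K :=
  Matrix.of fun j i => (pp a b q n (j : ℕ)).coeff (i : ℕ)

/-- the row-operation matrix -/
def amat (n : ℕ) : Matrix (Fin (n+1)) (Fin (n+1)) K :=
  Matrix.of fun j k => if (k : ℕ) = (j : ℕ) + 1 then 1
    else if k = j then (if (j : ℕ) = n then 1 else -1) else 0

lemma amat_det (n : ℕ) : (amat (K := K) n).det = (-1) ^ n := by
  have h : (amat (K := K) n).BlockTriangular id := by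
    intro i j hij
    simp only [amat, Matrix.of_apply, id] at hij ⊢
    rw [if_neg (by omega), if_neg (fun h => absurd (congrArg Fin.val h) (by omega))]
  rw [Matrix.det_of_upperTriangular h]
  have : ∀ j : Fin (n+1), amat (K := K) n j j = (if (j:ℕ) = n then 1 else -1) := by
    intro j; simp [amat]
  simp_rw [this]
  rw [Fin.prod_univ_castSucc]
  simp only [Fin.val_last, if_pos rfl, mul_one, Fin.coe_castSucc]
  have : ∀ j : Fin n, (if ((j : ℕ) = n) then (1:K) else -1) = -1 := by
    intro j; rw [if_neg (by omega)]
  simp_rw [this]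
  simp

lemma pp_diff (a b q : K) {n j : ℕ} (hj : j < n) :
    pp a b q (n+1) (j+1) - pp a b q (n+1) j
      = Polynomial.C (b * q ^ (n-1-j) - a * q ^ j) * (Polynomial.X * pp a b q n j) := by
  unfold pp
  have h1 : n + 1 - 1 - (j+1) = n - 1 - j := by omega
  have h2 : n + 1 - 1 - j = (n - 1 - j) + 1 := by omega
  rw [h1, h2, prod_range_succ, prod_range_succ]
  simp only [map_sub]
  ring

lemma amat_mul_cm (a b q : K) (n : ℕ) (j i : Fin (n+1)) :
    (amat (K:=K) n * cm a b q (n+1)) j i =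
      if (j:ℕ) < n then
        (Polynomial.C (b * q ^ (n-1-(j:ℕ)) - a * q ^ (j:ℕ)) * (Polynomial.X * pp a b q n (j:ℕ))).coeff (i:ℕ)
      else (pp a b q (n+1) n).coeff (i:ℕ) := by
  rw [Matrix.mul_apply]
  by_cases h : (j:ℕ) < n
  · rw [if_pos h]
    set j1 : Fin (n+1) := ⟨(j:ℕ)+1, by omega⟩ with hj1
    have hsplit : ∀ k : Fin (n+1), amat (K:=K) n j k * cm a b q (n+1) k i
        = (if k = j1 then cm a b q (n+1) j1 i else 0)
          + (if k = j then -(cm a b q (n+1) j i) else 0) := by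
      intro k
      have hval : (j1 : ℕ) = (j:ℕ) + 1 := by rw [hj1]
      have hne : j ≠ j1 := fun hh => by
        have := congrArg Fin.val hh; omega
      simp only [amat, Matrix.of_apply]
      by_cases hk1 : (k:ℕ) = (j:ℕ) + 1
      · have hkj1 : k = j1 := by apply Fin.ext; omega
        rw [if_pos hk1, if_pos hkj1, if_neg (by rw [hkj1]; exact hne.symm ∘ Eq.symm ∘ Eq.symm), hkj1]
        ring
      · rw [if_neg hk1]
        by_cases hk2 : k = j
        · subst hk2
          rw [if_neg (fun hh => hne hh), if_neg (show ¬((k:ℕ) = n) by omega)]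
          simp
        · rw [if_neg (fun hh : k = j1 => hk1 (by rw [hh])), if_neg hk2, if_neg hk2]
          ring
    rw [Finset.sum_congr rfl (fun k _ => hsplit k), Finset.sum_add_distrib,
      Finset.sum_ite_eq' univ j1, Finset.sum_ite_eq' univ j]
    simp only [mem_univ, if_pos]
    have : cm a b q (n+1) j1 i - cm a b q (n+1) j i
        = (pp a b q (n+1) ((j:ℕ)+1) - pp a b q (n+1) (j:ℕ)).coeff (i:ℕ) := by
      simp [cm, hj1, Polynomial.coeff_sub]
    rw [← sub_eq_add_neg] at *
    rw [this, pp_diff a b q h]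
  · rw [if_neg h]
    have hj : (j:ℕ) = n := by omega
    have hsplit : ∀ k : Fin (n+1), amat (K:=K) n j k * cm a b q (n+1) k i
        = (if k = j then cm a b q (n+1) j i else 0) := by
      intro k
      simp only [amat, Matrix.of_apply]
      rw [if_neg (by omega)]
      by_cases hk2 : k = j
      · rw [if_pos hk2, if_pos hk2, if_pos hj, hk2]; ring
      · rw [if_neg hk2, if_neg hk2]; ring
    rw [Finset.sum_congr rfl (fun k _ => hsplit k), Finset.sum_ite_eq' univ j]
    simp only [mem_univ, if_pos]
    simp [cm, hj]

lemma pp_coeff_zero (a b q : K) (n j : ℕ) : (pp a b q n j).coeff 0 = 1 := by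
  rw [Polynomial.coeff_zero_eq_eval_zero]
  simp [pp, Polynomial.eval_prod]

lemma det_cm_succ (a b q : K) (n : ℕ) :
    (cm a b q (n+1)).det = (∏ k ∈ range n, (b * q^(n-1-k) - a * q^k)) * (cm a b q n).det := by
  have key : ((-1:K)^n) * (cm a b q (n+1)).det = (amat (K:=K) n * cm a b q (n+1)).det := by
    rw [Matrix.det_mul, amat_det]
  conv at key => rw [Matrix.det_succ_column_zero (A := amat (K:=K) n * cm a b q (n+1))]
  have hzero : ∀ i : Fin (n+1), i ≠ Fin.last n →
      (-1:K)^(i:ℕ) * (amat (K:=K) n * cm a b q (n+1)) i 0 *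
        ((amat (K:=K) n * cm a b q (n+1)).submatrix i.succAbove Fin.succ).det = 0 := by
    intro i hi
    have hlt : (i:ℕ) < n := by
      have := Fin.val_lt_last hi
      omega
    rw [amat_mul_cm, if_pos hlt]
    simp [Polynomial.coeff_C_mul, Polynomial.mul_coeff_zero]
  rw [Finset.sum_eq_single (Fin.last n) (fun i _ hi => hzero i hi) (by simp)] at key
  have hlast : (amat (K:=K) n * cm a b q (n+1)) (Fin.last n) 0 = 1 := by
    rw [amat_mul_cm, if_neg (by simp)]
    exact pp_coeff_zero a b q (n+1) n
  rw [hlast, Fin.val_last, mul_one, Fin.succAbove_last] at key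
  have hsub : ((amat (K:=K) n * cm a b q (n+1)).submatrix Fin.castSucc Fin.succ) =
      Matrix.of fun (j i : Fin n) =>
        (b * q^(n-1-(j:ℕ)) - a * q^(j:ℕ)) * (cm a b q n) j i := by
    ext j i
    rw [Matrix.submatrix_apply, amat_mul_cm, if_pos (by simp [Fin.castSucc_lt_last j, j.isLt])]
    simp only [Fin.coe_castSucc, Fin.val_succ]
    rw [Polynomial.coeff_C_mul, Polynomial.coeff_X_mul]
    rfl
  rw [hsub, Matrix.det_mul_column] at key
  have := mul_left_cancel₀ (pow_ne_zero n (neg_ne_zero.mpr (one_ne_zero (α := K)))) key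
  rw [this, ← Fin.prod_univ_eq_prod_range (fun k => (b * q ^ (n - 1 - k) - a * q ^ k)) n]

lemma det_cm_eq (a b q : K) (n : ℕ) :
    (cm a b q n).det = ∏ j ∈ range n, ∏ k ∈ range j, (b * q^(j-1-k) - a * q^k) := by
  induction n with
  | zero => simp [cm]
  | succ n ih =>
    rw [det_cm_succ, ih, prod_range_succ, mul_comm]

lemma factor_lemma {b q : K} (a : K) (hq : q ≠ 0) (hb : b ≠ 0) {n k : ℕ} (hk : k < n) :
    q^(n-1-k) * b * (1 - q^((2*(k:ℤ)+1-(n:ℤ))) * a / b) = b * q^(n-1-k) - a * q^k := by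
  have hz : (q:K)^(n-1-k) * q^((2*(k:ℤ)+1-(n:ℤ))) = q^k := by
    rw [← zpow_natCast q (n-1-k), ← zpow_add₀ hq, show ((n-1-k:ℕ):ℤ) + (2*(k:ℤ)+1-(n:ℤ)) = ((k:ℕ):ℤ) by omega, zpow_natCast]
  have expand : q^(n-1-k) * b * (1 - q^((2*(k:ℤ)+1-(n:ℤ))) * a / b)
      = b * q^(n-1-k) - (q^(n-1-k) * q^((2*(k:ℤ)+1-(n:ℤ)))) * a := by
    field_simp
  rw [expand, hz]; ring

lemma sum_range_sub_eq_choose (n : ℕ) : ∑ k ∈ range n, (n-1-k) = n.choose 2 := by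
  have h1 := Finset.sum_range_id_mul_two n
  have h2 : Nat.choose n 2 = n * (n-1) / 2 := Nat.choose_two_right n
  have h3 : ∑ k ∈ range n, (n-1-k) = ∑ k ∈ range n, k := by
    rw [← Finset.sum_range_reflect]
    apply Finset.sum_congr rfl
    intro k hk
    rw [mem_range] at hk
    omega
  omega

lemma F_eq {b q : K} (a : K) (hq : q ≠ 0) (hb : b ≠ 0) (n : ℕ) :
    ∏ k ∈ range n, (b * q^(n-1-k) - a * q^k)
      = q^(n.choose 2) * b^n * ∏ k ∈ range n, (1 - q^((2*(k:ℤ)+1-(n:ℤ))) * a / b) := by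
  rw [← sum_range_sub_eq_choose n, ← Finset.prod_pow_eq_pow_sum,
    show b^n = ∏ _k ∈ range n, b by simp, ← Finset.prod_mul_distrib, ← Finset.prod_mul_distrib]
  apply Finset.prod_congr rfl
  intro k hk
  rw [mem_range] at hk
  exact (factor_lemma a hq hb hk).symm


lemma E_eq_T {b q : K} (a : K) (hq : q ≠ 0) (hb : b ≠ 0) (n : ℕ) :
    ∏ j ∈ range n, ∏ k ∈ range j, (b * q^(j-1-k) - a * q^k)
      = q^(n.choose 3) * b^(n.choose 2) * ∏ j ∈ range n, qPoch q (q^((j:ℤ)+1-(n:ℤ)) * a / b) j := by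
  induction n with
  | zero => simp
  | succ n ih =>
    rw [prod_range_succ, ih, F_eq a hq hb n]
    have hsplit : ∏ j ∈ range (n+1), qPoch q (q^((j:ℤ)+1-((n+1:ℕ):ℤ)) * a / b) j
        = (∏ j ∈ range n, qPoch q (q^((j:ℤ)+1-(n:ℤ)) * a / b) j)
          * ∏ j ∈ range n, (1 - q^(2*(j:ℤ)+1-(n:ℤ)) * a / b) := by
      rw [prod_range_succ']
      have h0 : qPoch q (q^((0:ℤ)+1-((n+1:ℕ):ℤ)) * a / b) 0 = 1 := by simp [qPoch]
      have hf : ∀ j ∈ range n, qPoch q (q^(((j+1:ℕ):ℤ)+1-((n+1:ℕ):ℤ)) * a / b) (j+1)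
          = qPoch q (q^((j:ℤ)+1-(n:ℤ)) * a / b) j * (1 - q^(2*(j:ℤ)+1-(n:ℤ)) * a / b) := by
        intro j hj
        have he : ((j+1:ℕ):ℤ)+1-((n+1:ℕ):ℤ) = (j:ℤ)+1-(n:ℤ) := by push_cast; ring
        rw [he]
        unfold qPoch
        rw [prod_range_succ]
        congr 1
        have hzz : q ^ ((j:ℤ)+1-(n:ℤ)) * q^(j:ℤ) = q ^ (2*(j:ℤ)+1-(n:ℤ)) := by
          rw [← zpow_add₀ hq]; ring_nf
        rw [← zpow_natCast q j, ← hzz]; ring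
      rw [Finset.prod_congr rfl hf]
      simp only [qPoch, prod_range_zero, mul_one]
      rw [Finset.prod_mul_distrib]
    push_cast at hsplit ⊢
    rw [hsplit]
    rw [show (n+1).choose 3 = n.choose 2 + n.choose 3 from Nat.choose_succ_succ n 2,
      show (n+1).choose 2 = n.choose 1 + n.choose 2 from Nat.choose_succ_succ n 1,
      Nat.choose_one_right, pow_add, pow_add]
    ring

lemma qPoch_mul_shift (q c : K) (t n : ℕ) :
    qPoch q (c * q^t) n * qPoch q c t = qPoch q c n * ∏ i ∈ range t, (1 - c * q^i * q^n) := by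
  have h1 : qPoch q c (t+n) = qPoch q c t * qPoch q (c * q^t) n := by
    unfold qPoch
    rw [prod_range_add]
    congr 1
    apply Finset.prod_congr rfl
    intro i _
    rw [pow_add]; ring
  have h2 : qPoch q c (n+t) = qPoch q c n * ∏ i ∈ range t, (1 - c * q^i * q^n) := by
    unfold qPoch
    rw [prod_range_add]
    congr 1
    apply Finset.prod_congr rfl
    intro i _
    rw [pow_add]; ring
  rw [mul_comm]
  rw [← h1, show t + n = n + t by omega, h2]

lemma pp_eval (a b q x : K) (n j : ℕ) :
    (pp a b q n j).eval x = (∏ t ∈ range j, (1 - a * q^t * x)) * ∏ t ∈ range (n-1-j), (1 - b * q^t * x) := by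
  simp only [pp, Polynomial.eval_mul, Polynomial.eval_prod, Polynomial.eval_sub,
    Polynomial.eval_one, Polynomial.eval_mul, Polynomial.eval_C, Polynomial.eval_X]

lemma entry_eq (a b q : K) (m j n : ℕ) :
    (qPoch q (a*q^j) n * qPoch q (b*q^(m-1-j)) n) * (qPoch q a j * qPoch q b (m-1-j))
      = (qPoch q a n * qPoch q b n) * (pp a b q m j).eval (q^n) := by
  rw [pp_eval]
  have h1 := qPoch_mul_shift q a j n
  have h2 := qPoch_mul_shift q b (m-1-j) n
  calc (qPoch q (a*q^j) n * qPoch q (b*q^(m-1-j)) n) * (qPoch q a j * qPoch q b (m-1-j))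
      = (qPoch q (a*q^j) n * qPoch q a j) * (qPoch q (b*q^(m-1-j)) n * qPoch q b (m-1-j)) := by ring
    _ = (qPoch q a n * ∏ i ∈ range j, (1 - a * q^i * q^n))
        * (qPoch q b n * ∏ i ∈ range (m-1-j), (1 - b * q^i * q^n)) := by rw [h1, h2]
    _ = _ := by ring

lemma prod_filter_lt {M : Type*} [CommMonoid M] (m : ℕ) (f : Fin m → Fin m → M) :
    ∏ p ∈ univ.filter (fun p : Fin m × Fin m => p.1 < p.2), f p.1 p.2
      = ∏ i : Fin m, ∏ j ∈ Ioi i, f i j := by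
  rw [Finset.prod_filter, Fintype.prod_prod_type]
  apply Finset.prod_congr rfl
  intro i _
  rw [← Finset.prod_filter]
  apply Finset.prod_congr ?_ (fun _ _ => rfl)
  ext j; simp


end DetQPochHelpers

/-- Determinant evaluation:
`det_{1≤j,k≤m}((aq^{j-1};q)_{l_k} (bq^{m-j};q)_{l_k})
 = q^(C(m,3)) b^(C(m,2)) ∏_j [(a;q)_{l_j}(b;q)_{l_j}(q^{j-m}a/b;q)_{j-1}/((a;q)_{j-1}(b;q)_{j-1})]
   · ∏_{i<j}(q^{l_j}-q^{l_i})`. -/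
theorem det_qpoch_eval {K : Type*} [Field K] (m : ℕ) (a b q : K)
    (l : Fin m → ℕ) (hl : StrictMono l)
    (hq : q ≠ 0) (hb : b ≠ 0)
    (ha' : ∀ j < m, qPoch q a j ≠ 0) (hb' : ∀ j < m, qPoch q b j ≠ 0) :
    Matrix.det (Matrix.of fun j k : Fin m =>
        qPoch q (a * q ^ (j : ℕ)) (l k) * qPoch q (b * q ^ (m - 1 - (j : ℕ))) (l k)) =
      q ^ Nat.choose m 3 * b ^ Nat.choose m 2 *
        (∏ j : Fin m,
          qPoch q a (l j) * qPoch q b (l j) *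
            qPoch q (q ^ (((j : ℕ) : ℤ) + 1 - (m : ℤ)) * a / b) (j : ℕ) /
            (qPoch q a (j : ℕ) * qPoch q b (j : ℕ))) *
        ∏ p ∈ Finset.univ.filter (fun p : Fin m × Fin m => p.1 < p.2),
          (q ^ l p.2 - q ^ l p.1) := by
  classical
  set M0 : Matrix (Fin m) (Fin m) K := Matrix.of fun j k : Fin m =>
      qPoch q (a * q ^ (j : ℕ)) (l k) * qPoch q (b * q ^ (m - 1 - (j : ℕ))) (l k) with hM0
  set x : Fin m → K := fun k => q ^ (l k) with hx
  set G : Fin m → K := fun k => qPoch q a (l k) * qPoch q b (l k) with hG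
  set d : Fin m → K := fun j => qPoch q a (j:ℕ) * qPoch q b (m-1-(j:ℕ)) with hd
  set d' : Fin m → K := fun j => qPoch q a (j:ℕ) * qPoch q b (j:ℕ) with hd'
  set pch : Fin m → K := fun j => qPoch q (q ^ (((j : ℕ) : ℤ) + 1 - (m : ℤ)) * a / b) (j : ℕ) with hpch
  have hd0 : ∀ j : Fin m, d j ≠ 0 := fun j =>
    mul_ne_zero (ha' _ j.isLt) (hb' _ (by have := j.isLt; omega))
  have hd'0 : ∀ j : Fin m, d' j ≠ 0 := fun j =>
    mul_ne_zero (ha' _ j.isLt) (hb' _ j.isLt)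
  set Ev : Matrix (Fin m) (Fin m) K := Matrix.of fun j k : Fin m =>
      (pp a b q m (j:ℕ)).eval (x k) with hEv
  have stepA : (Matrix.of fun j k : Fin m => d j * M0 j k)
      = Matrix.of fun j k : Fin m => G k * Ev j k := by
    ext j k
    simp only [Matrix.of_apply, hM0, hd, hG, hEv, hx]
    have := entry_eq a b q m (j:ℕ) (l k)
    linear_combination this
  have e3 : Ev = cm a b q m * (Matrix.vandermonde x).transpose := by
    ext j k
    rw [Matrix.mul_apply, hEv]
    simp only [Matrix.of_apply]
    rw [Polynomial.eval_eq_sum_range' (pp_natDegree_lt a b q j.isLt) (x k),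
      ← Fin.sum_univ_eq_sum_range (fun i => (pp a b q m (j:ℕ)).coeff i * x k ^ i) m]
    apply Finset.sum_congr rfl
    intro i _
    simp [cm, Matrix.vandermonde]
  have key : (∏ j, d j) * M0.det = (∏ k, G k) * ((cm a b q m).det * (Matrix.vandermonde x).det) := by
    rw [← Matrix.det_mul_column d M0, stepA, Matrix.det_mul_row G Ev, e3, Matrix.det_mul,
      Matrix.det_transpose]
  rw [det_cm_eq a b q m, E_eq_T a hq hb m, Matrix.det_vandermonde] at key
  -- conversions
  have f1 : ∏ j, d j = ∏ j, d' j := by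
    rw [hd, hd', Finset.prod_mul_distrib, Finset.prod_mul_distrib]
    congr 1
    rw [Fin.prod_univ_eq_prod_range (fun j => qPoch q b (m-1-j)) m,
      Finset.prod_range_reflect (fun j => qPoch q b j) m,
      ← Fin.prod_univ_eq_prod_range (fun j => qPoch q b j) m]
  have f3 : ∏ j ∈ range m, qPoch q (q^((j:ℤ)+1-(m:ℤ)) * a / b) j = ∏ j, pch j := by
    rw [hpch, Fin.prod_univ_eq_prod_range (fun j => qPoch q (q ^ ((j:ℤ) + 1 - (m : ℤ)) * a / b) j) m]
  have f4 : ∏ p ∈ Finset.univ.filter (fun p : Fin m × Fin m => p.1 < p.2),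
      (q ^ l p.2 - q ^ l p.1) = ∏ i : Fin m, ∏ j ∈ Ioi i, (x j - x i) :=
    prod_filter_lt m (fun i j => q ^ l j - q ^ l i)
  rw [f3] at key
  apply mul_left_cancel₀ (Finset.prod_ne_zero_iff.mpr (fun j _ => hd0 j))
  rw [key, f4, f1]
  have hsplit : (∏ j, (G j * pch j / d' j)) = (∏ j, G j) * (∏ j, pch j) / ∏ j, d' j := by
    rw [Finset.prod_div_distrib, Finset.prod_mul_distrib]
  rw [hsplit]
  have hD' : (∏ j, d' j) ≠ 0 := Finset.prod_ne_zero_iff.mpr (fun j _ => hd'0 j)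
  field_simp
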